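/- Let k ≥ 1 and n ≥ 2k, and let λ = (λ₁,…,λ_n) ∈ Γ_k^+. Then for every vector v = (v₁,…,v_n) ∈ ℝ^n, ((n−k+1)/2) σ_{k−1}(λ) Σ_{i=1}^n v_i² − Σ_{i=1}^n σ_{k−1}(λ|i) v_i² ≥ ((n−2k)(n−k+1)/(2n)) σ_{k−1}(λ) Σ_{i=1}^n v_i². -/

import Mathlib

/-- The k-th elementary symmetric polynomial of `λ = (λ₁,…,λ_n)` (with `σ_0 = 1`). -/
def esym (n : ℕ) (k : ℕ) (lam : Fin n → ℝ) : ℝ :=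
  ∑ s ∈ Finset.powersetCard k (Finset.univ : Finset (Fin n)), ∏ i ∈ s, lam i

open Polynomial

lemma my_esymm_zero (s : Multiset ℝ) : s.esymm 0 = 1 := by
  simp [Multiset.esymm, Multiset.powersetCard_zero_left]

lemma my_esymm_cons (a : ℝ) (s : Multiset ℝ) (j : ℕ) :
    (a ::ₘ s).esymm (j + 1) = s.esymm (j + 1) + a * s.esymm j := by
  rw [Multiset.esymm, Multiset.powersetCard_cons, Multiset.map_add, Multiset.sum_add,
    Multiset.map_map]
  congr 1
  rw [Multiset.esymm, ← Multiset.sum_map_mul_left]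
  apply congrArg
  apply Multiset.map_congr rfl
  intro t _
  simp [Multiset.prod_cons]

lemma my_splits_derivative {p : ℝ[X]} (hp : p.Splits) :
    (derivative p).Splits := by
  by_cases h0 : derivative p = 0
  · rw [h0]; exact Splits.zero
  have h1 : p.roots.card = p.natDegree := (splits_iff_card_roots).mp hp
  have h2 := p.card_roots_le_derivative
  have h3 : (derivative p).roots.card ≤ (derivative p).natDegree :=
    (derivative p).card_roots'
  have h4 : (derivative p).natDegree ≤ p.natDegree - 1 := p.natDegree_derivative_le
  rw [splits_iff_card_roots]
  omega

lemma my_splits_iterate_derivative (d : ℕ) {p : ℝ[X]} (hp : p.Splits) :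
    (derivative^[d] p).Splits := by
  induction d with
  | zero => exact hp
  | succ d ih => rw [Function.iterate_succ_apply']; exact my_splits_derivative ih

lemma my_reverse_multiset_prod (M : Multiset ℝ[X]) :
    M.prod.reverse = (M.map Polynomial.reverse).prod := by
  induction M using Multiset.induction_on with
  | empty =>
      simp only [Multiset.map_zero, Multiset.prod_zero]
      rw [show (1 : ℝ[X]) = Polynomial.C 1 by simp, Polynomial.reverse_C]
  | cons a s ih => simp [Multiset.prod_cons, Polynomial.reverse_mul_of_domain, ih]

lemma my_splits_multiset_prod (M : Multiset ℝ[X])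
    (h : ∀ q ∈ M, q.Splits) : M.prod.Splits := by
  induction M using Multiset.induction_on with
  | empty => simpa using Splits.one
  | cons a s ih =>
      rw [Multiset.prod_cons]
      exact Splits.mul (h a (Multiset.mem_cons_self a s))
        (ih fun q hq => h q (Multiset.mem_cons_of_mem hq))

lemma my_splits_reverse {p : ℝ[X]} (hp : p.Splits) :
    p.reverse.Splits := by
  by_cases h0 : p = 0
  · rw [h0, Polynomial.reverse_zero]; exact Splits.zero
  have hfac := hp.eq_prod_roots
  rw [hfac, Polynomial.reverse_mul_of_domain, my_reverse_multiset_prod]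
  apply Splits.mul
  · rw [Polynomial.reverse_C]; exact Splits.C _
  · apply my_splits_multiset_prod
    intro q hq
    rw [Multiset.mem_map] at hq
    obtain ⟨q', hq', rfl⟩ := hq
    rw [Multiset.mem_map] at hq'
    obtain ⟨r, _, rfl⟩ := hq'
    apply Splits.of_natDegree_le_one
    exact le_trans (Polynomial.reverse_natDegree_le _) (by simp)

lemma my_quadratic_discrim {q : ℝ[X]} (hq : q.Splits)
    (hdeg : q.natDegree ≤ 2) (ha : q.coeff 2 ≠ 0) :
    4 * (q.coeff 2 * q.coeff 0) ≤ (q.coeff 1) ^ 2 := by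
  have hq0 : q ≠ 0 := fun h => by simp [h] at ha
  have hndeg : q.natDegree = 2 := le_antisymm hdeg (le_natDegree_of_ne_zero ha)
  have hdeg' : q.degree ≠ 0 := by
    rw [degree_eq_natDegree hq0, hndeg]; norm_num
  obtain ⟨x, hx⟩ := hq.exists_eval_eq_zero hdeg'
  have heval : q.eval x = ∑ i ∈ Finset.range 3, q.coeff i * x ^ i := by
    rw [eval_eq_sum_range, hndeg]
  rw [hx] at heval
  simp [Finset.sum_range_succ] at heval
  have h2 : 4 * q.coeff 2 * (q.coeff 0 + q.coeff 1 * x + q.coeff 2 * x ^ 2) = 0 := by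
    rw [← heval]; ring
  nlinarith [sq_nonneg (2 * q.coeff 2 * x + q.coeff 1), h2]

lemma my_descFactorial_pos {k n : ℕ} (h : k ≤ n) : 0 < n.descFactorial k := by
  have h1 := Nat.factorial_mul_descFactorial h
  have h2 := Nat.factorial_pos n
  by_contra h0
  push_neg at h0
  rw [Nat.le_zero.mp h0, Nat.mul_zero] at h1
  omega

lemma my_descFactorial_eq {a b : ℕ} (h : b ≤ a) :
    ((a - b).factorial : ℝ) * (a.descFactorial b : ℝ) = (a.factorial : ℝ) := by
  exact_mod_cast congrArg (fun x : ℕ => (x : ℝ)) (Nat.factorial_mul_descFactorial h)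

set_option maxHeartbeats 2000000 in
lemma newton_ineq (s : Multiset ℝ) {m k : ℕ} (hm : Multiset.card s = m)
    (hk : 2 ≤ k) (hkm : k ≤ m) :
    (k : ℝ) * (((m - k : ℕ) : ℝ) + 2) * (s.esymm k * s.esymm (k - 2)) ≤
      ((k - 1 : ℕ) : ℝ) * (((m - k : ℕ) : ℝ) + 1) * (s.esymm (k - 1)) ^ 2 := by
  obtain ⟨j, rfl⟩ : ∃ j, k = j + 2 := ⟨k - 2, by omega⟩
  obtain ⟨e, rfl⟩ : ∃ e, m = j + 2 + e := ⟨m - (j + 2), by omega⟩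
  have hsub1 : j + 2 + e - (j + 2) = e := by omega
  have hsub2 : j + 2 - 1 = j + 1 := by omega
  have hsub3 : j + 2 - 2 = j := by omega
  rw [hsub1, hsub2, hsub3]
  by_cases hz : s.esymm (j + 2) = 0
  · rw [hz]
    have : ((j : ℝ) + 2) * ((e : ℝ) + 2) * (0 * s.esymm j) = 0 := by ring
    push_cast
    rw [this]
    positivity
  -- the polynomial ∏ (X + C r)
  set P : Polynomial ℝ := (s.map fun r => Polynomial.X + Polynomial.C r).prod with hP
  have hPmonic : ∀ q ∈ s.map fun r => Polynomial.X + Polynomial.C r, q.Monic := by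
    intro q hq; rw [Multiset.mem_map] at hq; obtain ⟨r, _, rfl⟩ := hq
    exact monic_X_add_C r
  have hPdeg : P.natDegree = j + 2 + e := by
    rw [hP, Polynomial.natDegree_multiset_prod_of_monic _ hPmonic]
    simp [Multiset.map_map, Function.comp, natDegree_X_add_C, hm]
  have hPsplits : P.Splits := by
    apply my_splits_multiset_prod
    intro q hq; rw [Multiset.mem_map] at hq; obtain ⟨r, _, rfl⟩ := hq
    apply Splits.of_natDegree_le_one
    rw [natDegree_X_add_C]
  have hPcoeff : ∀ c : ℕ, c ≤ j + 2 + e → P.coeff c = s.esymm (j + 2 + e - c) := by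
    intro c hc
    rw [hP, Multiset.prod_X_add_C_coeff s (by omega : c ≤ Multiset.card s), hm]
  -- first iterated derivative
  set P1 : Polynomial ℝ := Polynomial.derivative^[e] P with hP1
  have hP1splits : P1.Splits := my_splits_iterate_derivative e hPsplits
  have hP1c : ∀ c : ℕ, c ≤ j + 2 →
      P1.coeff c = ((c + e).descFactorial e : ℝ) * s.esymm (j + 2 - c) := by
    intro c hc
    rw [hP1, Polynomial.coeff_iterate_derivative, hPcoeff (c + e) (by omega),
      nsmul_eq_mul]
    congr 2
    omega
  have hP1top : P1.coeff (j + 2) = ((j + 2 + e).descFactorial e : ℝ) := by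
    rw [hP1c (j + 2) le_rfl]
    simp [my_esymm_zero]
  have hP1deg : P1.natDegree = j + 2 := by
    refine le_antisymm ?_ ?_
    · have h := Polynomial.natDegree_iterate_derivative P e
      rw [← hP1, hPdeg] at h
      omega
    · apply Polynomial.le_natDegree_of_ne_zero
      rw [hP1top]
      have h := my_descFactorial_pos (by omega : e ≤ j + 2 + e)
      have : (0:ℝ) < (((j + 2 + e).descFactorial e : ℕ) : ℝ) := by exact_mod_cast h
      exact ne_of_gt this
  -- reverse
  set B : Polynomial ℝ := P1.reverse with hB
  have hBsplits : B.Splits := my_splits_reverse hP1splits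
  have hBdeg : B.natDegree ≤ j + 2 := hP1deg ▸ P1.reverse_natDegree_le
  have hBc : ∀ c : ℕ, c ≤ j + 2 → B.coeff c = P1.coeff (j + 2 - c) := by
    intro c hc
    rw [hB, Polynomial.coeff_reverse, hP1deg, Polynomial.revAt_le hc]
  -- second iterated derivative: the quadratic
  set Q : Polynomial ℝ := Polynomial.derivative^[j] B with hQd
  have hQsplits : Q.Splits := my_splits_iterate_derivative j hBsplits
  have hQdeg : Q.natDegree ≤ 2 := by
    have h := Polynomial.natDegree_iterate_derivative B j
    rw [← hQd] at h
    omega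
  have hQ2 : Q.coeff 2 = ((2 + j).descFactorial j : ℝ) * ((e).descFactorial e : ℝ)
      * s.esymm (j + 2) := by
    rw [hQd, Polynomial.coeff_iterate_derivative, nsmul_eq_mul,
      hBc (2 + j) (by omega), show j + 2 - (2 + j) = 0 by omega, hP1c 0 (by omega),
      show j + 2 - 0 = j + 2 by omega, show 0 + e = e by omega]
    ring
  have hQ1 : Q.coeff 1 = ((1 + j).descFactorial j : ℝ) * ((1 + e).descFactorial e : ℝ)
      * s.esymm (j + 1) := by
    rw [hQd, Polynomial.coeff_iterate_derivative, nsmul_eq_mul,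
      hBc (1 + j) (by omega), show j + 2 - (1 + j) = 1 by omega, hP1c 1 (by omega)]
    rw [show j + 2 - 1 = j + 1 by omega]
    ring
  have hQ0 : Q.coeff 0 = ((j).descFactorial j : ℝ) * ((2 + e).descFactorial e : ℝ)
      * s.esymm j := by
    rw [hQd, Polynomial.coeff_iterate_derivative, nsmul_eq_mul,
      hBc (0 + j) (by omega), show j + 2 - (0 + j) = 2 by omega, hP1c 2 (by omega)]
    rw [show j + 2 - 2 = j by omega]
    ring
  have hQ2ne : Q.coeff 2 ≠ 0 := by
    rw [hQ2]
    have h1 := my_descFactorial_pos (by omega : j ≤ 2 + j)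
    have h2 := my_descFactorial_pos (le_refl e)
    have c1 : (0:ℝ) < ((2 + j).descFactorial j : ℝ) := by exact_mod_cast h1
    have c2 : (0:ℝ) < ((e).descFactorial e : ℝ) := by exact_mod_cast h2
    exact mul_ne_zero (mul_ne_zero (ne_of_gt c1) (ne_of_gt c2)) hz
  have hdisc := my_quadratic_discrim hQsplits hQdeg hQ2ne
  rw [hQ2, hQ1, hQ0] at hdisc
  -- descFactorial values in ℝ
  -- descFactorial values in ℝ
  have hfe0 : ((e.descFactorial e : ℕ) : ℝ) = (e.factorial : ℝ) := by
    exact_mod_cast congrArg (fun x : ℕ => (x : ℝ)) e.descFactorial_self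
  have hfj0 : ((j.descFactorial j : ℕ) : ℝ) = (j.factorial : ℝ) := by
    exact_mod_cast congrArg (fun x : ℕ => (x : ℝ)) j.descFactorial_self
  have hfj1 : (((1 + j).descFactorial j : ℕ) : ℝ) = ((j : ℝ) + 1) * (j.factorial : ℝ) := by
    have h := my_descFactorial_eq (by omega : j ≤ 1 + j)
    rw [show 1 + j - j = 1 by omega] at h
    simp only [Nat.factorial_one, Nat.cast_one, one_mul] at h
    rw [h, show 1 + j = j + 1 by omega, Nat.factorial_succ]
    push_cast; ring
  have hfe1 : (((1 + e).descFactorial e : ℕ) : ℝ) = ((e : ℝ) + 1) * (e.factorial : ℝ) := by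
    have h := my_descFactorial_eq (by omega : e ≤ 1 + e)
    rw [show 1 + e - e = 1 by omega] at h
    simp only [Nat.factorial_one, Nat.cast_one, one_mul] at h
    rw [h, show 1 + e = e + 1 by omega, Nat.factorial_succ]
    push_cast; ring
  have hfj2 : (((2 + j).descFactorial j : ℕ) : ℝ)
      = ((j : ℝ) + 2) * ((j : ℝ) + 1) * (j.factorial : ℝ) / 2 := by
    have h := my_descFactorial_eq (by omega : j ≤ 2 + j)
    rw [show 2 + j - j = 2 by omega] at h
    have h2 : ((Nat.factorial 2 : ℕ) : ℝ) = 2 := by norm_num [Nat.factorial]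
    rw [h2] at h
    have h3 : ((2 + j).factorial : ℝ) = ((j : ℝ) + 2) * ((j : ℝ) + 1) * (j.factorial : ℝ) := by
      rw [show 2 + j = (j + 1) + 1 by omega, Nat.factorial_succ, Nat.factorial_succ]
      push_cast; ring
    rw [h3] at h
    linarith
  have hfe2 : (((2 + e).descFactorial e : ℕ) : ℝ)
      = ((e : ℝ) + 2) * ((e : ℝ) + 1) * (e.factorial : ℝ) / 2 := by
    have h := my_descFactorial_eq (by omega : e ≤ 2 + e)
    rw [show 2 + e - e = 2 by omega] at h
    have h2 : ((Nat.factorial 2 : ℕ) : ℝ) = 2 := by norm_num [Nat.factorial]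
    rw [h2] at h
    have h3 : ((2 + e).factorial : ℝ) = ((e : ℝ) + 2) * ((e : ℝ) + 1) * (e.factorial : ℝ) := by
      rw [show 2 + e = (e + 1) + 1 by omega, Nat.factorial_succ, Nat.factorial_succ]
      push_cast; ring
    rw [h3] at h
    linarith
  rw [hfj2, hfe0, hfj0, hfe2, hfj1, hfe1] at hdisc
  have hJ : (0:ℝ) < (j.factorial : ℝ) := by exact_mod_cast j.factorial_pos
  have hE : (0:ℝ) < (e.factorial : ℝ) := by exact_mod_cast e.factorial_pos
  have hc : (0:ℝ) < ((j:ℝ)+1) * ((e:ℝ)+1) * (j.factorial : ℝ)^2 * (e.factorial : ℝ)^2 := by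
    positivity
  push_cast
  refine le_of_mul_le_mul_left ?_ hc
  nlinarith [hdisc]

/-- the multiset of values of `lam` away from `i` -/
def lamMS (n : ℕ) (lam : Fin n → ℝ) (i : Fin n) : Multiset ℝ :=
  (Finset.univ.erase i).val.map lam

lemma lamMS_card (n : ℕ) (lam : Fin n → ℝ) (i : Fin n) :
    Multiset.card (lamMS n lam i) = n - 1 := by
  rw [lamMS, Multiset.card_map, ← Finset.card_def, Finset.card_erase_of_mem (Finset.mem_univ i)]
  simp

lemma univ_val_eq (n : ℕ) (i : Fin n) :
    (Finset.univ : Finset (Fin n)).val = i ::ₘ (Finset.univ.erase i).val := by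
  rw [Finset.erase_val]
  exact (Multiset.cons_erase (by simp : i ∈ (Finset.univ : Finset (Fin n)).val)).symm

lemma esym_eq_esymm (n : ℕ) (k : ℕ) (lam : Fin n → ℝ) :
    esym n k lam = ((Finset.univ : Finset (Fin n)).val.map lam).esymm k :=
  (Finset.esymm_map_val lam Finset.univ k).symm

lemma esym_decomp (n : ℕ) (j : ℕ) (lam : Fin n → ℝ) (i : Fin n) :
    esym n (j + 1) lam
      = (lamMS n lam i).esymm (j + 1) + lam i * (lamMS n lam i).esymm j := by
  rw [esym_eq_esymm, univ_val_eq n i, Multiset.map_cons, my_esymm_cons, lamMS]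

lemma esym_update (n : ℕ) (j : ℕ) (lam : Fin n → ℝ) (i : Fin n) :
    esym n j (Function.update lam i 0) = (lamMS n lam i).esymm j := by
  have hmap : (Finset.univ.erase i).val.map (Function.update lam i 0)
      = (Finset.univ.erase i).val.map lam := by
    apply Multiset.map_congr rfl
    intro x hx
    rw [← Finset.mem_def] at hx
    exact Function.update_of_ne (Finset.ne_of_mem_erase hx) 0 lam
  rw [esym_eq_esymm, univ_val_eq n i, Multiset.map_cons, Function.update_self, hmap]
  cases j with
  | zero => rw [my_esymm_zero, my_esymm_zero]
  | succ j => rw [my_esymm_cons, lamMS]; ring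

lemma cone_pos (n : ℕ) (k : ℕ) (hk : 1 ≤ k) (hkn : k + 1 ≤ n) (lam : Fin n → ℝ)
    (hG : ∀ j : ℕ, 1 ≤ j → j ≤ k → 0 < esym n j lam) (i : Fin n) :
    ∀ j < k, 0 < (lamMS n lam i).esymm j := by
  induction k, hk using Nat.le_induction with
  | base =>
      intro j hj
      interval_cases j
      rw [my_esymm_zero]; norm_num
  | succ K hK ih =>
      have hpos : ∀ j < K, 0 < (lamMS n lam i).esymm j := by
        apply ih (by omega)
        intro j h1 h2
        exact hG j h1 (by omega)
      intro j hj
      rcases Nat.lt_or_ge j K with hjK | hjK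
      · exact hpos j hjK
      have hj' : j = K := by omega
      subst hj'
      obtain ⟨j', rfl⟩ : ∃ j', j = j' + 1 := ⟨j - 1, by omega⟩
      by_contra hne
      push_neg at hne
      set t := lamMS n lam i with ht
      set T0 := t.esymm j' with hT0d
      set T1 := t.esymm (j' + 1) with hT1d
      set T2 := t.esymm (j' + 2) with hT2d
      have hT0 : 0 < T0 := hpos j' (by omega)
      have h1 : 0 < T1 + lam i * T0 := by
        have := hG (j' + 1) (by omega) (by omega)
        rwa [esym_decomp n j' lam i] at this
      have h2 : 0 < T2 + lam i * T1 := by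
        have := hG (j' + 2) (by omega) (by omega)
        rwa [esym_decomp n (j' + 1) lam i] at this
      have hNew := newton_ineq t (lamMS_card n lam i) (by omega : 2 ≤ j' + 2)
        (by omega : j' + 2 ≤ n - 1)
      rw [show j' + 2 - 1 = j' + 1 by omega, show j' + 2 - 2 = j' by omega,
        ← hT0d, ← hT1d, ← hT2d] at hNew
      set D := ((n - 1 - (j' + 2) : ℕ) : ℝ) with hD
      have hDpos : (0:ℝ) ≤ D := by positivity
      have hQ : T1 ^ 2 < T2 * T0 := by
        nlinarith [mul_nonneg (le_of_lt h1) (neg_nonneg.mpr hne), mul_pos h2 hT0]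
      have hcast : ((j' + 2 : ℕ) : ℝ) = (j' : ℝ) + 2 := by push_cast; ring
      have hcast2 : ((j' + 1 : ℕ) : ℝ) = (j' : ℝ) + 1 := by push_cast; ring
      rw [hcast, hcast2] at hNew
      have hj'0 : (0:ℝ) ≤ (j' : ℝ) := Nat.cast_nonneg j'
      have hC1 : (0:ℝ) < ((j' : ℝ) + 2) * (D + 2) := by positivity
      have hC : ((j' : ℝ) + 1) * (D + 1) ≤ ((j' : ℝ) + 2) * (D + 2) := by nlinarith
      nlinarith [hNew, mul_pos hC1 (sub_pos.mpr hQ),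
        mul_nonneg (sub_nonneg.mpr hC) (sq_nonneg T1)]

lemma esym_zero (n : ℕ) (lam : Fin n → ℝ) : esym n 0 lam = 1 := by
  simp [esym]

lemma key_bound (n k : ℕ) (hk : 1 ≤ k) (hn : 2 * k ≤ n) (lam : Fin n → ℝ)
    (hG : ∀ j : ℕ, 1 ≤ j → j ≤ k → 0 < esym n j lam) (i : Fin n) :
    (n : ℝ) * esym n (k - 1) (Function.update lam i 0)
      ≤ (k : ℝ) * ((n : ℝ) - k + 1) * esym n (k - 1) lam := by
  rcases eq_or_lt_of_le hk with h1 | h2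
  · -- k = 1
    rw [← h1, show (1:ℕ) - 1 = 0 from rfl, esym_zero, esym_zero]
    push_cast
    linarith
  · -- k ≥ 2
    obtain ⟨j, rfl⟩ : ∃ j, k = j + 2 := ⟨k - 2, by omega⟩
    rw [show j + 2 - 1 = j + 1 by omega]
    set t := lamMS n lam i with ht
    set T0 := t.esymm j with hT0d
    set T1 := t.esymm (j + 1) with hT1d
    set T2 := t.esymm (j + 2) with hT2d
    have hcone := cone_pos n (j + 2) (by omega) (by omega) lam hG i
    have hT0 : 0 < T0 := hcone j (by omega)
    have hT1 : 0 < T1 := hcone (j + 1) (by omega)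
    have h2' : 0 < T2 + lam i * T1 := by
      have := hG (j + 2) (by omega) (le_refl _)
      rwa [esym_decomp n (j + 1) lam i] at this
    have hNew := newton_ineq t (lamMS_card n lam i) (by omega : 2 ≤ j + 2)
      (by omega : j + 2 ≤ n - 1)
    rw [show j + 2 - 1 = j + 1 by omega, show j + 2 - 2 = j by omega,
      ← hT0d, ← hT1d, ← hT2d] at hNew
    have hDval : ((n - 1 - (j + 2) : ℕ) : ℝ) = (n : ℝ) - (j : ℝ) - 3 := by
      rw [show n - 1 - (j + 2) = n - (j + 3) by omega, Nat.cast_sub (by omega : j + 3 ≤ n)]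
      push_cast; ring
    rw [hDval] at hNew
    have hcast : ((j + 2 : ℕ) : ℝ) = (j : ℝ) + 2 := by push_cast; ring
    have hcast2 : ((j + 1 : ℕ) : ℝ) = (j : ℝ) + 1 := by push_cast; ring
    rw [hcast, hcast2] at hNew
    rw [esym_update, esym_decomp n j lam i, ← ht, ← hT0d, ← hT1d, hcast]
    have hnr : 2 * ((j : ℝ) + 2) ≤ (n : ℝ) := by
      have : ((2 * (j + 2) : ℕ) : ℝ) ≤ (n : ℝ) := Nat.cast_le.mpr hn
      push_cast at this; linarith
    have hj0 : (0:ℝ) ≤ (j : ℝ) := Nat.cast_nonneg j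
    have hC1 : (0:ℝ) < ((j : ℝ) + 2) * ((n : ℝ) - ((j : ℝ) + 2) + 1) := by nlinarith
    have hmul : (n : ℝ) * T1 * T1
        ≤ ((j : ℝ) + 2) * ((n : ℝ) - ((j : ℝ) + 2) + 1) * (T1 + lam i * T0) * T1 := by
      nlinarith [hNew, mul_pos (mul_pos hC1 hT0) h2']
    exact le_of_mul_le_mul_right hmul hT1

/-- for `λ ∈ Γ_k^+` with `n ≥ 2k`,
`((n−k+1)/2) σ_{k−1}(λ) Σ v_i² − Σ σ_{k−1}(λ|i) v_i²
  ≥ ((n−2k)(n−k+1)/(2n)) σ_{k−1}(λ) Σ v_i²`. -/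
theorem key_quadratic_inequality (n k : ℕ) (hk : 1 ≤ k) (hn : 2 * k ≤ n)
    (lam : Fin n → ℝ) (hG : ∀ j : ℕ, 1 ≤ j → j ≤ k → 0 < esym n j lam)
    (v : Fin n → ℝ) :
    ((n : ℝ) - 2 * k) * ((n : ℝ) - k + 1) / (2 * n) * esym n (k - 1) lam *
        (∑ i : Fin n, (v i) ^ 2) ≤
      ((n : ℝ) - k + 1) / 2 * esym n (k - 1) lam * (∑ i : Fin n, (v i) ^ 2) -
        ∑ i : Fin n, esym n (k - 1) (Function.update lam i 0) * (v i) ^ 2 := by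
  have hn0 : (0:ℝ) < (n:ℝ) := by
    have h : 0 < n := by omega
    exact_mod_cast h
  set E := esym n (k - 1) lam with hE
  set S := ∑ i : Fin n, (v i) ^ 2 with hS
  have hsum : (∑ i : Fin n, esym n (k - 1) (Function.update lam i 0) * (v i) ^ 2)
      ≤ (k : ℝ) * ((n : ℝ) - k + 1) / n * E * S := by
    rw [hS, Finset.mul_sum]
    apply Finset.sum_le_sum
    intro i _
    have hkb := key_bound n k hk hn lam hG i
    have h1 : esym n (k - 1) (Function.update lam i 0)
        ≤ (k : ℝ) * ((n : ℝ) - k + 1) / n * E := by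
      rw [hE, div_mul_eq_mul_div, le_div_iff₀ hn0]
      calc esym n (k - 1) (Function.update lam i 0) * n
          = n * esym n (k - 1) (Function.update lam i 0) := by ring
        _ ≤ _ := hkb
    calc esym n (k - 1) (Function.update lam i 0) * v i ^ 2
        ≤ ((k : ℝ) * ((n : ℝ) - k + 1) / n * E) * v i ^ 2 :=
          mul_le_mul_of_nonneg_right h1 (sq_nonneg _)
      _ = (k : ℝ) * ((n : ℝ) - k + 1) / n * E * v i ^ 2 := by ring
  have hid : ((n : ℝ) - 2 * k) * ((n : ℝ) - k + 1) / (2 * n) * E * S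
        + (k : ℝ) * ((n : ℝ) - k + 1) / n * E * S
      = ((n : ℝ) - k + 1) / 2 * E * S := by
    field_simp
    ring
  linarith [hsum, hid]
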